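/- Let p be a prime with p ≡ 13 or 17 (mod 20) such that ν_p(F_{α(p)}) = 1. Then the ℤ-submodule of the module of sequences ℕ → ℤ spanned by the p-kernel of the sequence a(n) = ν_p(F_{n+1}) is generated by the (p+3)/2 sequences n ↦ ν_p(F_{n+1}) and n ↦ ν_p(F_{pn+j+1}) for 0 ≤ j ≤ (p−1)/2. In particular, this sequence is p-regular of rank at most (p+3)/2. -/

import Mathlib

namespace FibReg

@[ext] structure GR (A : Type) where
  x : A
  y : A

variable {A : Type} [CommRing A]

instance : Add (GR A) := ⟨fun a b => ⟨a.x + b.x, a.y + b.y⟩⟩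
instance : Neg (GR A) := ⟨fun a => ⟨-a.x, -a.y⟩⟩
instance : Mul (GR A) :=
  ⟨fun a b => ⟨a.x * b.x + a.y * b.y, a.x * b.y + a.y * b.x + a.y * b.y⟩⟩
instance : Zero (GR A) := ⟨⟨0, 0⟩⟩
instance : One (GR A) := ⟨⟨1, 0⟩⟩

@[simp] lemma add_x (a b : GR A) : (a + b).x = a.x + b.x := rfl
@[simp] lemma add_y (a b : GR A) : (a + b).y = a.y + b.y := rfl
@[simp] lemma neg_x (a : GR A) : (-a).x = -a.x := rfl
@[simp] lemma neg_y (a : GR A) : (-a).y = -a.y := rfl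
@[simp] lemma mul_x (a b : GR A) : (a * b).x = a.x * b.x + a.y * b.y := rfl
@[simp] lemma mul_y (a b : GR A) : (a * b).y = a.x * b.y + a.y * b.x + a.y * b.y := rfl
@[simp] lemma zero_x : (0 : GR A).x = 0 := rfl
@[simp] lemma zero_y : (0 : GR A).y = 0 := rfl
@[simp] lemma one_x : (1 : GR A).x = 1 := rfl
@[simp] lemma one_y : (1 : GR A).y = 0 := rfl

instance : CommRing (GR A) where
  add_assoc a b c := by ext <;> simp <;> ring
  zero_add a := by ext <;> simp
  add_zero a := by ext <;> simp
  add_comm a b := by ext <;> simp <;> ring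
  neg_add_cancel a := by ext <;> simp
  left_distrib a b c := by ext <;> simp <;> ring
  right_distrib a b c := by ext <;> simp <;> ring
  zero_mul a := by ext <;> simp
  mul_zero a := by ext <;> simp
  mul_assoc a b c := by ext <;> simp <;> ring
  one_mul a := by ext <;> simp
  mul_one a := by ext <;> simp
  mul_comm a b := by ext <;> simp <;> ring
  nsmul := nsmulRec
  zsmul := zsmulRec

@[simp] lemma sub_x (a b : GR A) : (a - b).x = a.x - b.x := by
  simp [sub_eq_add_neg]
@[simp] lemma sub_y (a b : GR A) : (a - b).y = a.y - b.y := by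
  simp [sub_eq_add_neg]

/-- scalar embedding -/
def C : A →+* GR A where
  toFun a := ⟨a, 0⟩
  map_one' := rfl
  map_mul' a b := by ext <;> simp
  map_zero' := rfl
  map_add' a b := by ext <;> simp

@[simp] lemma C_x (a : A) : (C a).x = a := rfl
@[simp] lemma C_y (a : A) : (C a).y = 0 := rfl

/-- the golden-ratio element, φ² = φ + 1 -/
def phi : GR A := ⟨0, 1⟩

@[simp] lemma phi_x : (phi : GR A).x = 0 := rfl
@[simp] lemma phi_y : (phi : GR A).y = 1 := rfl

lemma phi_pow (n : ℕ) :
    (phi : GR A) ^ (n + 1) = ⟨(Nat.fib n : A), (Nat.fib (n + 1) : A)⟩ := by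
  induction n with
  | zero => ext <;> simp [phi]
  | succ n ih =>
      rw [pow_succ, ih]
      ext <;> simp [Nat.fib_add_two] <;> push_cast <;> ring

lemma psi_pow (n : ℕ) :
    ((1 : GR A) - phi) ^ (n + 1) = ⟨(Nat.fib (n + 2) : A), -(Nat.fib (n + 1) : A)⟩ := by
  induction n with
  | zero => ext <;> simp [phi, sub_eq_add_neg]
  | succ n ih =>
      rw [pow_succ, ih]
      ext <;> simp [sub_eq_add_neg, Nat.fib_add_two] <;> push_cast <;> ring

@[simp] lemma phi_pow_y (n : ℕ) : ((phi : GR A) ^ n).y = (Nat.fib n : A) := by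
  cases n with
  | zero => simp
  | succ n => rw [phi_pow]

lemma natCast_GR (n : ℕ) : (n : GR A) = C (n : A) := (map_natCast (C : A →+* GR A) n).symm

instance (p : ℕ) [Fact p.Prime] : CharP (GR (ZMod p)) p where
  cast_eq_zero_iff n := by
    rw [natCast_GR]
    constructor
    · intro hC
      have : ((n : ZMod p)) = 0 := congrArg GR.x hC
      exact (ZMod.natCast_eq_zero_iff n p).1 this
    · intro hd
      rw [(ZMod.natCast_eq_zero_iff n p).2 hd, map_zero]

lemma C_mul_left_cancel {p : ℕ} [Fact p.Prime] {a : ZMod p} (ha : a ≠ 0) {z w : GR (ZMod p)}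
    (h : C a * z = C a * w) : z = w := by
  ext
  · have hx := congrArg GR.x h
    simp at hx
    tauto
  · have hy := congrArg GR.y h
    simp at hy
    tauto

theorem dvd_fib_half (p : ℕ) (hp : p.Prime) (h4 : p % 4 = 1) (h5 : p % 5 = 2 ∨ p % 5 = 3) :
    p ∣ Nat.fib ((p + 1) / 2) := by
  haveI : Fact p.Prime := ⟨hp⟩
  have hp5 : 5 ≤ p := by
    have := hp.two_le
    omega
  have hsq : ¬ IsSquare (5 : ZMod p) := by
    haveI : Fact (Nat.Prime 5) := ⟨by norm_num⟩
    have h5p := ZMod.exists_sq_eq_prime_iff_of_mod_four_eq_one (p := p) (q := 5) h4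
      (by norm_num)
    rw [show ((5 : ℕ) : ZMod p) = (5 : ZMod p) by push_cast; ring] at h5p
    rw [h5p, ← ZMod.natCast_mod]
    rcases h5 with h | h <;> rw [h] <;> clear * - this <;> decide +revert
  have heuler : (5 : ZMod p) ^ (p / 2) = -1 := by
    have h1 := legendreSym.eq_pow p 5
    have h2 : legendreSym p 5 = -1 := by
      apply (legendreSym.eq_neg_one_iff p).2
      rwa [show (((5 : ℤ)) : ZMod p) = (5 : ZMod p) by push_cast; ring]
    rw [h2] at h1
    rw [show (((5 : ℤ)) : ZMod p) = (5 : ZMod p) by push_cast; ring] at h1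
    rw [← h1]; push_cast; ring
  set u : GR (ZMod p) := C 2 * phi - 1 with hu_def
  have hu2 : u * u = C 5 := by ext <;> simp [hu_def, phi] <;> ring
  have hup : u ^ p = -u := by
    calc u ^ p = (u * u) ^ (p / 2) * u := by
          rw [← pow_two, ← pow_mul, ← pow_succ]
          congr 1
          omega
    _ = C ((5 : ZMod p) ^ (p / 2)) * u := by rw [hu2, map_pow]
    _ = C (-1) * u := by rw [heuler]
    _ = -u := by rw [map_neg, map_one, neg_one_mul]
  have hchar : u ^ p = C 2 * phi ^ p - 1 := by
    have h := add_pow_char (R := GR (ZMod p)) (p := p) (C 2 * phi) (-1)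
    have hodd : Odd p := hp.odd_of_ne_two (by omega)
    rw [show C (2 : ZMod p) * phi + -1 = u by rw [hu_def]; ring] at h
    rw [h, hodd.neg_one_pow, mul_pow, ← map_pow, ZMod.pow_card]
    ring
  have h2ne : (2 : ZMod p) ≠ 0 := by
    have : ((2 : ℕ) : ZMod p) ≠ 0 := by
      rw [Ne, ZMod.natCast_eq_zero_iff]
      intro hdvd
      have := Nat.le_of_dvd (by norm_num) hdvd
      omega
    simpa using this
  have hphip : (phi : GR (ZMod p)) ^ p = 1 - phi := by
    have h2' : C (2 : ZMod p) * phi ^ p = C 2 * ((1 : GR (ZMod p)) - phi) := by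
      have h3 := hchar.symm.trans hup
      have e : C (2 : ZMod p) = (2 : GR (ZMod p)) := map_ofNat C 2
      linear_combination h3 - e
    exact C_mul_left_cancel h2ne h2'
  have hphi2m : phi ^ (p + 1) = (-1 : GR (ZMod p)) := by
    rw [pow_succ, hphip]
    ext <;> simp [phi] <;> ring
  set m := (p + 1) / 2 with hm_def
  have hmodd : Odd m := ⟨p / 4, by omega⟩
  have hphim2 : phi ^ m * phi ^ m = (-1 : GR (ZMod p)) := by
    rw [← pow_add, show m + m = p + 1 by omega, hphi2m]
  have hps : phi * (1 - phi) = (-1 : GR (ZMod p)) := by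
    ext <;> simp [phi] <;> ring
  have hphipsim : phi ^ m * (1 - phi) ^ m = (-1 : GR (ZMod p)) := by
    rw [← mul_pow, hps, hmodd.neg_one_pow]
  have hunit : IsUnit (phi : GR (ZMod p)) := by
    apply IsUnit.of_mul_eq_one (phi - 1)
    ext <;> simp [phi] <;> ring
  have heq : phi ^ m = ((1 : GR (ZMod p)) - phi) ^ m := by
    have hcancel : phi ^ m * (phi ^ m - ((1 : GR (ZMod p)) - phi) ^ m) = 0 := by
      rw [mul_sub, hphim2, hphipsim]; ring
    have := ((hunit.pow m).mul_right_eq_zero).1 hcancel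
    exact sub_eq_zero.1 this
  have hm1 : m = (m - 1) + 1 := by omega
  rw [hm1, phi_pow, psi_pow] at heq
  have hy : ((Nat.fib (m - 1 + 1) : ZMod p)) = -(Nat.fib (m - 1 + 1) : ZMod p) :=
    congrArg GR.y heq
  have hz : ((Nat.fib m : ZMod p)) = 0 := by
    rw [← hm1] at hy
    have h2z : (2 : ZMod p) * (Nat.fib m : ZMod p) = 0 := by
      rw [two_mul]
      nth_rewrite 2 [hy]
      ring
    rcases mul_eq_zero.1 h2z with h | h
    · exact absurd h h2ne
    · exact h
  exact (ZMod.natCast_eq_zero_iff _ p).1 hz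


section Expansion
open Finset

def yhom (A : Type) [CommRing A] : GR A →+ A where
  toFun := GR.y
  map_zero' := rfl
  map_add' _ _ := rfl

@[simp] lemma C_mul_y (a : A) (w : GR A) : (C a * w).y = a * w.y := by simp

lemma mk_eq (a b : A) : (⟨a, b⟩ : GR A) = C a + C b * phi := by
  ext <;> simp only [add_x, add_y, mul_x, mul_y, C_x, C_y, phi_x, phi_y] <;> ring

lemma fib_mul_expand (m k : ℕ) :
    (Nat.fib ((m + 1) * k) : ℤ) =
      ∑ j ∈ Finset.range (k + 1),
        (Nat.fib (m + 1) : ℤ) ^ j * (Nat.fib m : ℤ) ^ (k - j) * (k.choose j : ℤ) *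
          (Nat.fib j : ℤ) := by
  have hphi : (phi : GR ℤ) ^ ((m + 1) * k)
      = (C (Nat.fib (m + 1) : ℤ) * phi + C (Nat.fib m : ℤ)) ^ k := by
    rw [pow_mul, phi_pow, mk_eq]
    ring
  rw [add_pow] at hphi
  have hy := congrArg GR.y hphi
  rw [phi_pow_y] at hy
  rw [hy, show GR.y = ⇑(yhom ℤ) from rfl, map_sum]
  apply Finset.sum_congr rfl
  intro j _
  show ((C ((Nat.fib (m + 1) : ℤ)) * phi) ^ j * (C ((Nat.fib m : ℤ))) ^ (k - j) *
      ((k.choose j : ℕ) : GR ℤ)).y = _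
  rw [natCast_GR]
  have hterm : (C ((Nat.fib (m + 1) : ℤ)) * phi) ^ j * (C ((Nat.fib m : ℤ))) ^ (k - j) *
      C (((k.choose j : ℕ) : ℤ)) =
      C ((Nat.fib (m + 1) : ℤ) ^ j * (Nat.fib m : ℤ) ^ (k - j) * ((k.choose j : ℕ) : ℤ)) *
        phi ^ j := by
    rw [mul_pow, ← map_pow, ← map_pow, map_mul, map_mul]
    ring
  rw [hterm, C_mul_y, phi_pow_y]

lemma exists_expansion1 (m k : ℕ) (hk : 1 ≤ k) : ∃ c : ℤ,
    (Nat.fib ((m + 1) * k) : ℤ) =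
      (k : ℤ) * (Nat.fib (m + 1) : ℤ) * (Nat.fib m : ℤ) ^ (k - 1)
        + (Nat.fib (m + 1) : ℤ) ^ 2 * c := by
  obtain ⟨k', rfl⟩ : ∃ k', k = k' + 1 := ⟨k - 1, by omega⟩
  refine ⟨∑ j ∈ Finset.range k',
    (Nat.fib (m + 1) : ℤ) ^ j * (Nat.fib m : ℤ) ^ (k' + 1 - (j + 1 + 1)) *
      ((k' + 1).choose (j + 1 + 1) : ℤ) * (Nat.fib (j + 1 + 1) : ℤ), ?_⟩
  rw [fib_mul_expand, Finset.sum_range_succ', Finset.sum_range_succ', Finset.mul_sum]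
  simp only [zero_add, Nat.fib_zero, Nat.cast_zero, mul_zero, add_zero, Nat.fib_one,
    Nat.cast_one, mul_one, Nat.choose_one_right, pow_one]
  rw [Nat.add_sub_cancel]
  have : ∀ j ∈ Finset.range k',
      (Nat.fib (m + 1) : ℤ) ^ (j + 1 + 1) * (Nat.fib m : ℤ) ^ (k' + 1 - (j + 1 + 1)) *
        ((k' + 1).choose (j + 1 + 1) : ℤ) * (Nat.fib (j + 1 + 1) : ℤ) =
      (Nat.fib (m + 1) : ℤ) ^ 2 *
        ((Nat.fib (m + 1) : ℤ) ^ j * (Nat.fib m : ℤ) ^ (k' + 1 - (j + 1 + 1)) *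
          ((k' + 1).choose (j + 1 + 1) : ℤ) * (Nat.fib (j + 1 + 1) : ℤ)) := by
    intro j _
    ring
  rw [Finset.sum_congr rfl this]
  push_cast
  ring

lemma exists_expansion_p (m q : ℕ) (hq : q.Prime) (hodd : q % 2 = 1) : ∃ c d : ℤ,
    (Nat.fib ((m + 1) * q) : ℤ) =
      (q : ℤ) * (Nat.fib (m + 1) : ℤ) * (Nat.fib m : ℤ) ^ (q - 1)
        + (q : ℤ) * (Nat.fib (m + 1) : ℤ) ^ 2 * c
        + (Nat.fib (m + 1) : ℤ) ^ 3 * d := by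
  obtain ⟨q', rfl⟩ : ∃ q', q = q' + 3 := ⟨q - 3, by have := hq.two_le; omega⟩
  set x := (Nat.fib (m + 1) : ℤ)
  set y := (Nat.fib m : ℤ)
  have hch2 : (((q' + 3).choose 2 : ℕ) : ℤ) = ((q' + 3) : ℤ) * (((q' + 1) / 2 + 1 : ℕ) : ℤ) := by
    rw [Nat.choose_two_right]
    rw [show q' + 3 - 1 = q' + 2 from rfl]
    have h2 : (q' + 3) * (q' + 2) / 2 = (q' + 3) * ((q' + 2) / 2) :=
      Nat.mul_div_assoc _ (by omega)
    rw [h2, show (q' + 2) / 2 = (q' + 1) / 2 + 1 by omega]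
    push_cast
    ring
  refine ⟨(((q' + 1) / 2 + 1 : ℕ) : ℤ) * y ^ (q' + 1),
    ∑ j ∈ Finset.range (q' + 1),
      x ^ j * y ^ (q' + 3 + 1 - (j + 3) - 1) * ((q' + 3).choose (j + 3) : ℤ) *
        (Nat.fib (j + 3) : ℤ), ?_⟩
  rw [fib_mul_expand, Finset.sum_range_succ', Finset.sum_range_succ', Finset.sum_range_succ',
    Finset.mul_sum]
  simp only [zero_add, Nat.fib_zero, Nat.cast_zero, mul_zero, add_zero, Nat.fib_one,
    Nat.cast_one, mul_one, Nat.choose_one_right, pow_one]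
  have : ∀ j ∈ Finset.range (q' + 1),
      x ^ (j + 1 + 1 + 1) * y ^ (q' + 3 - (j + 1 + 1 + 1)) *
        ((q' + 3).choose (j + 1 + 1 + 1) : ℤ) * (Nat.fib (j + 1 + 1 + 1) : ℤ) =
      x ^ 3 * (x ^ j * y ^ (q' + 3 + 1 - (j + 3) - 1) *
        ((q' + 3).choose (j + 3) : ℤ) * (Nat.fib (j + 3) : ℤ)) := by
    intro j _
    have e1 : j + 1 + 1 + 1 = j + 3 := by omega
    have e2 : q' + 3 - (j + 3) = q' + 3 + 1 - (j + 3) - 1 := by omega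
    rw [e1, e2]
    ring
  rw [Finset.sum_congr rfl this]
  have efib2 : (Nat.fib 2 : ℤ) = 1 := by norm_num
  have ee : q' + 3 - 2 = q' + 1 := by omega
  have ee2 : q' + 3 - 1 = q' + 2 := by omega
  simp only [show (1 : ℕ) + 1 = 2 from rfl] at *
  rw [efib2, hch2, ee, ee2]
  push_cast
  ring

end Expansion

section Valuation

lemma padicValNat_eq_of_dvd_not_dvd {p n t : ℕ} [Fact p.Prime] (hn : n ≠ 0)
    (h1 : p ^ t ∣ n) (h2 : ¬ p ^ (t + 1) ∣ n) : padicValNat p n = t := by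
  have hle := (padicValNat_dvd_iff_le hn).1 h1
  by_contra hne
  exact h2 ((padicValNat_dvd_iff_le hn).2 (by omega))

lemma not_dvd_fib_pred {p m : ℕ} (hp : p.Prime) (hm : 1 ≤ m) (hpm : p ∣ Nat.fib m) :
    ¬ p ∣ Nat.fib (m - 1) := by
  intro hcon
  have hcop := Nat.fib_coprime_fib_succ (m - 1)
  rw [show m - 1 + 1 = m by omega] at hcop
  have hd : p ∣ Nat.gcd (Nat.fib (m - 1)) (Nat.fib m) := Nat.dvd_gcd hcon hpm
  rw [Nat.Coprime] at hcop
  rw [hcop] at hd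
  have := Nat.le_of_dvd one_pos hd
  have := hp.two_le
  omega

lemma val_base {p m u : ℕ} (hp : p.Prime) (hm : 1 ≤ m) (hu1 : 1 ≤ u) (hu : ¬ p ∣ u)
    (hpm : p ∣ Nat.fib m) :
    padicValNat p (Nat.fib (m * u)) = padicValNat p (Nat.fib m) := by
  haveI : Fact p.Prime := ⟨hp⟩
  set t := padicValNat p (Nat.fib m) with ht
  have hfm : Nat.fib m ≠ 0 := (Nat.fib_pos.2 (by omega)).ne'
  have hfmu : Nat.fib (m * u) ≠ 0 := by
    have : 1 ≤ m * u := Nat.one_le_iff_ne_zero.2 (by positivity)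
    exact (Nat.fib_pos.2 (by omega)).ne'
  have ht1 : 1 ≤ t := one_le_padicValNat_of_dvd hfm hpm
  set P : ℤ := (p : ℤ) with hP
  set X : ℤ := (Nat.fib m : ℤ) with hX
  set Y : ℤ := (Nat.fib (m - 1) : ℤ) with hY
  have hdt : P ^ t ∣ X := by
    rw [hP, hX]
    exact_mod_cast (pow_padicValNat_dvd : p ^ t ∣ Nat.fib m)
  have hndt : ¬ P ^ (t + 1) ∣ X := by
    have hn := pow_succ_padicValNat_not_dvd (p := p) hfm
    intro hcon
    rw [hP, hX] at hcon
    exact hn (by exact_mod_cast hcon)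
  obtain ⟨c, hc⟩ := exists_expansion1 (m - 1) u hu1
  rw [show m - 1 + 1 = m by omega] at hc
  have hcop : IsCoprime (P ^ (t + 1)) ((u : ℤ) * Y ^ (u - 1)) := by
    have h1 : Nat.Coprime (p ^ (t + 1)) (u * Nat.fib (m - 1) ^ (u - 1)) := by
      apply Nat.Coprime.pow_left
      apply Nat.Coprime.mul_right
      · exact (hp.coprime_iff_not_dvd).2 hu
      · exact Nat.Coprime.pow_right _
          ((hp.coprime_iff_not_dvd).2 (not_dvd_fib_pred hp hm hpm))
    have h2 := (Nat.isCoprime_iff_coprime).2 h1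
    rw [show ((u : ℤ) * Y ^ (u - 1)) = ((u * Nat.fib (m - 1) ^ (u - 1) : ℕ) : ℤ) by
        rw [hY]; push_cast; ring,
      show P ^ (t + 1) = ((p ^ (t + 1) : ℕ) : ℤ) by rw [hP]; push_cast; ring]
    exact h2
  have hX2 : P ^ (t + 1) ∣ X ^ 2 * c := by
    apply dvd_mul_of_dvd_left
    calc P ^ (t + 1) ∣ P ^ (2 * t) := pow_dvd_pow _ (by omega)
    _ = (P ^ t) ^ 2 := by ring
    _ ∣ X ^ 2 := pow_dvd_pow_of_dvd hdt 2
  apply padicValNat_eq_of_dvd_not_dvd hfmu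
  · have hdd : P ^ t ∣ (Nat.fib (m * u) : ℤ) := by
      rw [hc]
      exact dvd_add ((hdt.mul_left _).mul_right _)
        (dvd_mul_of_dvd_left (hdt.trans (dvd_pow_self X (by norm_num))) c)
    rw [hP] at hdd
    exact_mod_cast hdd
  · intro hcon
    have hcon' : P ^ (t + 1) ∣ (Nat.fib (m * u) : ℤ) := by
      rw [hP]
      exact_mod_cast hcon
    rw [hc] at hcon'
    have h1 : P ^ (t + 1) ∣ (u : ℤ) * X * Y ^ (u - 1) := by
      simpa [hX, hY] using dvd_sub hcon' hX2
    have h2 : P ^ (t + 1) ∣ X * ((u : ℤ) * Y ^ (u - 1)) := by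
      rw [show X * ((u : ℤ) * Y ^ (u - 1)) = (u : ℤ) * X * Y ^ (u - 1) by ring]
      exact h1
    exact hndt (hcop.dvd_of_dvd_mul_right h2)

lemma val_step {p m : ℕ} (hp : p.Prime) (hodd : p % 2 = 1) (hm : 1 ≤ m)
    (hpm : p ∣ Nat.fib m) :
    padicValNat p (Nat.fib (m * p)) = padicValNat p (Nat.fib m) + 1 := by
  haveI : Fact p.Prime := ⟨hp⟩
  set t := padicValNat p (Nat.fib m) with ht
  have hfm : Nat.fib m ≠ 0 := (Nat.fib_pos.2 (by omega)).ne'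
  have hp2 := hp.two_le
  have hfmp : Nat.fib (m * p) ≠ 0 := by
    have : 1 ≤ m * p := Nat.one_le_iff_ne_zero.2 (by positivity)
    exact (Nat.fib_pos.2 (by omega)).ne'
  have ht1 : 1 ≤ t := one_le_padicValNat_of_dvd hfm hpm
  set P : ℤ := (p : ℤ) with hP
  set X : ℤ := (Nat.fib m : ℤ) with hX
  set Y : ℤ := (Nat.fib (m - 1) : ℤ) with hY
  have hPne : P ≠ 0 := by
    rw [hP]
    exact_mod_cast hp.ne_zero
  have hdt : P ^ t ∣ X := by
    rw [hP, hX]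
    exact_mod_cast (pow_padicValNat_dvd : p ^ t ∣ Nat.fib m)
  have hndt : ¬ P ^ (t + 1) ∣ X := by
    have hn := pow_succ_padicValNat_not_dvd (p := p) hfm
    intro hcon
    rw [hP, hX] at hcon
    exact hn (by exact_mod_cast hcon)
  obtain ⟨c, d, hc⟩ := exists_expansion_p (m - 1) p hp hodd
  rw [show m - 1 + 1 = m by omega] at hc
  have hcop : ∀ s : ℕ, IsCoprime (P ^ s) (Y ^ (p - 1)) := by
    intro s
    have h1 : Nat.Coprime (p ^ s) (Nat.fib (m - 1) ^ (p - 1)) :=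
      Nat.Coprime.pow _ _ ((hp.coprime_iff_not_dvd).2 (not_dvd_fib_pred hp hm hpm))
    have h2 := (Nat.isCoprime_iff_coprime).2 h1
    rw [show (Y ^ (p - 1)) = ((Nat.fib (m - 1) ^ (p - 1) : ℕ) : ℤ) by
        rw [hY]; push_cast; ring,
      show P ^ s = ((p ^ s : ℕ) : ℤ) by rw [hP]; push_cast; ring]
    exact h2
  have hterm2 : P ^ (t + 2) ∣ P * X ^ 2 * c := by
    apply dvd_mul_of_dvd_left
    calc P ^ (t + 2) ∣ P ^ (1 + 2 * t) := pow_dvd_pow _ (by omega)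
    _ = P * (P ^ t) ^ 2 := by ring
    _ ∣ P * X ^ 2 := mul_dvd_mul_left P (pow_dvd_pow_of_dvd hdt 2)
  have hterm3 : P ^ (t + 2) ∣ X ^ 3 * d := by
    apply dvd_mul_of_dvd_left
    calc P ^ (t + 2) ∣ P ^ (3 * t) := pow_dvd_pow _ (by omega)
    _ = (P ^ t) ^ 3 := by ring
    _ ∣ X ^ 3 := pow_dvd_pow_of_dvd hdt 3
  have hterm1 : P ^ (t + 1) ∣ P * X * Y ^ (p - 1) := by
    have h1 : P ^ (t + 1) ∣ P * X := by
      rw [show t + 1 = 1 + t by ring, pow_add, pow_one]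
      exact mul_dvd_mul_left P hdt
    exact h1.mul_right _
  apply padicValNat_eq_of_dvd_not_dvd hfmp
  · have hdd : P ^ (t + 1) ∣ (Nat.fib (m * p) : ℤ) := by
      rw [hc]
      exact dvd_add (dvd_add hterm1 ((pow_dvd_pow _ (by omega)).trans hterm2))
        ((pow_dvd_pow _ (by omega)).trans hterm3)
    rw [hP] at hdd
    exact_mod_cast hdd
  · intro hcon
    have hcon' : P ^ (t + 2) ∣ (Nat.fib (m * p) : ℤ) := by
      rw [hP]
      exact_mod_cast (by exact hcon : p ^ (t + 1 + 1) ∣ Nat.fib (m * p))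
    rw [hc] at hcon'
    have e1 : P ^ (t + 2) ∣ P * X * Y ^ (p - 1) + P * X ^ 2 * c := by
      simpa [hX, hY, hP] using dvd_sub hcon' hterm3
    have e2 : P ^ (t + 2) ∣ P * X * Y ^ (p - 1) := by
      simpa using dvd_sub e1 hterm2
    have e3 : P * P ^ (t + 1) ∣ P * (X * Y ^ (p - 1)) := by
      rw [show P * P ^ (t + 1) = P ^ (t + 2) by ring,
        show P * (X * Y ^ (p - 1)) = P * X * Y ^ (p - 1) by ring]
      exact e2
    have e4 : P ^ (t + 1) ∣ X * Y ^ (p - 1) := (mul_dvd_mul_iff_left hPne).1 e3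
    exact hndt ((hcop (t + 1)).dvd_of_dvd_mul_right e4)

end Valuation
end FibReg


/-- The restricted period (rank of apparition) of the Fibonacci sequence modulo `p`:
the least positive `n` such that `p ∣ F n`. -/
noncomputable def fibAlpha (p : ℕ) : ℕ := sInf {n | 0 < n ∧ p ∣ Nat.fib n}

/-- The `k`-kernel of a sequence `a : ℕ → ℤ`: the set of sequences
`n ↦ a (k ^ e * n + i)` for `e ≥ 0` and `0 ≤ i ≤ k ^ e - 1`. -/
def kKernel (k : ℕ) (a : ℕ → ℤ) : Set (ℕ → ℤ) :=
  {b | ∃ e i : ℕ, i ≤ k ^ e - 1 ∧ b = fun n => a (k ^ e * n + i)}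


namespace FibReg

lemma alpha_facts {p : ℕ} (hp : p.Prime) (h : p % 20 = 13 ∨ p % 20 = 17) :
    0 < fibAlpha p ∧ p ∣ Nat.fib (fibAlpha p) ∧ fibAlpha p ≤ (p + 1) / 2 := by
  have hp2 := hp.two_le
  have h4 : p % 4 = 1 := by omega
  have h5 : p % 5 = 2 ∨ p % 5 = 3 := by omega
  have hmem : (p + 1) / 2 ∈ {n | 0 < n ∧ p ∣ Nat.fib n} :=
    ⟨by omega, dvd_fib_half p hp h4 h5⟩
  have hα : fibAlpha p ∈ {n | 0 < n ∧ p ∣ Nat.fib n} := Nat.sInf_mem ⟨_, hmem⟩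
  exact ⟨hα.1, hα.2, Nat.sInf_le hmem⟩

lemma alpha_dvd_iff {p : ℕ} (hp : p.Prime) (h : p % 20 = 13 ∨ p % 20 = 17) (n : ℕ) :
    p ∣ Nat.fib n ↔ fibAlpha p ∣ n := by
  obtain ⟨hpos, hdvd, -⟩ := alpha_facts hp h
  constructor
  · intro hn
    have hgpos : 0 < Nat.gcd n (fibAlpha p) := Nat.gcd_pos_of_pos_right _ hpos
    have hpg : p ∣ Nat.fib (Nat.gcd n (fibAlpha p)) := by
      rw [Nat.fib_gcd]
      exact Nat.dvd_gcd hn hdvd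
    have hle : fibAlpha p ≤ Nat.gcd n (fibAlpha p) := Nat.sInf_le ⟨hgpos, hpg⟩
    have hgle : Nat.gcd n (fibAlpha p) ≤ fibAlpha p :=
      Nat.le_of_dvd hpos (Nat.gcd_dvd_right _ _)
    have heq : Nat.gcd n (fibAlpha p) = fibAlpha p := le_antisymm hgle hle
    rw [← heq]
    exact Nat.gcd_dvd_left _ _
  · intro hdn
    exact dvd_trans hdvd (Nat.fib_dvd _ _ hdn)

lemma val_fib {p : ℕ} (hp : p.Prime) (h : p % 20 = 13 ∨ p % 20 = 17)
    (hwall : padicValNat p (Nat.fib (fibAlpha p)) = 1) (n : ℕ) (hn : 1 ≤ n) :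
    padicValNat p (Nat.fib n) =
      if fibAlpha p ∣ n then padicValNat p n + 1 else 0 := by
  haveI : Fact p.Prime := ⟨hp⟩
  have hp2 := hp.two_le
  have hodd : p % 2 = 1 := by omega
  obtain ⟨hαpos, hαdvd, hαle⟩ := alpha_facts hp h
  split_ifs with hdvd
  · obtain ⟨k, rfl⟩ := hdvd
    have hk : k ≠ 0 := by
      rintro rfl
      rw [Nat.mul_zero] at hn
      omega
    have claim : ∀ v u : ℕ, ¬ p ∣ u → 1 ≤ u →
        padicValNat p (Nat.fib (fibAlpha p * (p ^ v * u))) = v + 1 := by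
      intro v
      induction v with
      | zero =>
          intro w hw hw1
          rw [pow_zero, one_mul, val_base hp hαpos hw1 hw hαdvd, hwall]
      | succ v ih =>
          intro w hw hw1
          have hstep : fibAlpha p * (p ^ (v + 1) * w) = fibAlpha p * (p ^ v * w) * p := by
            ring
          have hm1 : 1 ≤ fibAlpha p * (p ^ v * w) :=
            Nat.mul_pos hαpos (Nat.mul_pos (pow_pos (by omega) v) hw1)
          have hpm : p ∣ Nat.fib (fibAlpha p * (p ^ v * w)) :=
            dvd_trans hαdvd (Nat.fib_dvd _ _ (dvd_mul_right _ _))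
          rw [hstep, val_step hp hodd hm1 hpm, ih w hw hw1]
    have hfact : p ^ padicValNat p k * ordCompl[p] k = k := by
      rw [show padicValNat p k = k.factorization p from (Nat.factorization_def k hp).symm]
      exact Nat.ordProj_mul_ordCompl_eq_self k p
    have hwd := Nat.not_dvd_ordCompl hp hk
    have hw1 : 1 ≤ ordCompl[p] k := Nat.ordCompl_pos p hk
    have hv := claim (padicValNat p k) (ordCompl[p] k) hwd hw1
    rw [hfact] at hv
    rw [hv]
    have hα0 : fibAlpha p ≠ 0 := hαpos.ne'
    have hpnα : ¬ p ∣ fibAlpha p := by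
      intro hc
      have := Nat.le_of_dvd hαpos hc
      omega
    rw [padicValNat.mul hα0 hk, padicValNat.eq_zero_of_not_dvd hpnα, zero_add]
  · exact padicValNat.eq_zero_of_not_dvd fun hc => hdvd ((alpha_dvd_iff hp h _).1 hc)

end FibReg

theorem p_regular_13_17 (p : ℕ) (hp : p.Prime)
    (h : p % 20 = 13 ∨ p % 20 = 17)
    (hwall : padicValNat p (Nat.fib (fibAlpha p)) = 1) :
    Submodule.span ℤ (kKernel p (fun n => (padicValNat p (Nat.fib (n + 1)) : ℤ))) =
      Submodule.span ℤ
        ({fun n => (padicValNat p (Nat.fib (n + 1)) : ℤ)} ∪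
          {b | ∃ j ≤ (p - 1) / 2,
            b = fun n => (padicValNat p (Nat.fib (p * n + j + 1)) : ℤ)}) ∧
    (Submodule.span ℤ
        (kKernel p (fun n => (padicValNat p (Nat.fib (n + 1)) : ℤ)))).FG ∧
    Module.rank ℤ
        (Submodule.span ℤ
          (kKernel p (fun n => (padicValNat p (Nat.fib (n + 1)) : ℤ)))) ≤
      (((p + 3) / 2 : ℕ) : Cardinal) := by
  classical
  haveI hfct : Fact p.Prime := ⟨hp⟩
  have hp2 := hp.two_le
  have hodd : p % 2 = 1 := by omega
  have hp13 : 13 ≤ p := by omega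
  obtain ⟨hαpos, hαdvd, hαle⟩ := FibReg.alpha_facts hp h
  haveI : NeZero (fibAlpha p) := ⟨hαpos.ne'⟩
  set α := fibAlpha p with hαdef
  set A : ℕ → ℤ := fun n => (padicValNat p (Nat.fib (n + 1)) : ℤ) with hA
  set S : Set (ℕ → ℤ) := {A} ∪ {b | ∃ j ≤ (p - 1) / 2,
      b = fun n => (padicValNat p (Nat.fib (p * n + j + 1)) : ℤ)} with hS
  have hpnα : ¬ p ∣ α := by
    intro hc
    have := Nat.le_of_dvd hαpos hc
    omega
  have hcop : Nat.Coprime p α := (hp.coprime_iff_not_dvd).2 hpnα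
  set u : (ZMod α)ˣ := ZMod.unitOfCoprime p hcop with hu_def
  have hu : ((u : (ZMod α)ˣ) : ZMod α) = (p : ZMod α) := ZMod.coe_unitOfCoprime p hcop
  have hunit : ∀ (k : ℕ) (x : ZMod α), ((p : ZMod α) ^ k * x = 0 ↔ x = 0) := by
    intro k x
    have hx := Units.mul_right_eq_zero (u := u ^ k) (a := x)
    rwa [Units.val_pow_eq_pow_val, hu] at hx
  have hdvdcast : ∀ x : ℕ, α ∣ x ↔ ((x : ℕ) : ZMod α) = 0 :=
    fun x => (ZMod.natCast_eq_zero_iff x α).symm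
  have hgval : ∀ j n : ℕ, j + 1 < p →
      padicValNat p (Nat.fib (p * n + j + 1)) = if α ∣ (p * n + j + 1) then 1 else 0 := by
    intro j n hj
    rw [FibReg.val_fib hp h hwall _ (by omega)]
    have h0 : padicValNat p (p * n + j + 1) = 0 := by
      apply padicValNat.eq_zero_of_not_dvd
      rw [show p * n + j + 1 = p * n + (j + 1) by omega]
      intro hd
      have hd2 := (Nat.dvd_add_right (dvd_mul_right p n)).1 hd
      have := Nat.le_of_dvd (by omega) hd2
      omega
    rw [h0]
  -- S is contained in the kernel
  have hsubS : S ⊆ kKernel p A := by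
    rw [hS]
    rintro b (hb | hb)
    · rw [Set.mem_singleton_iff] at hb
      subst hb
      refine ⟨0, 0, by simp, ?_⟩
      funext n
      simp
    · obtain ⟨j, hj, rfl⟩ := hb
      refine ⟨1, j, by rw [pow_one]; omega, ?_⟩
      funext n
      simp only [hA, pow_one]
  -- the kernel is contained in the span of S
  have hker : kKernel p A ⊆ (Submodule.span ℤ S : Submodule ℤ (ℕ → ℤ)) := by
    rintro b ⟨e, i, hi, rfl⟩
    rcases Nat.eq_zero_or_pos e with rfl | he
    · have hi0 : i = 0 := by simpa using hi
      subst hi0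
      have hb : (fun n => A (p ^ 0 * n + 0)) = A := by
        funext n
        simp
      rw [hb]
      apply Submodule.subset_span
      rw [hS]
      exact Or.inl rfl
    · have hpe1 : 1 ≤ p ^ e := Nat.one_le_pow _ _ (by omega)
      have hc2 : i + 1 ≤ p ^ e := by omega
      by_cases hcase : i + 1 = p ^ e
      · set j₀ := (p - 1) % α with hj₀def
        have hj₀lt : j₀ < α := Nat.mod_lt _ hαpos
        have hj₀le : j₀ ≤ (p - 1) / 2 := by omega
        have hj₀p : j₀ + 1 < p := by omega
        have hj₀cast : ((j₀ : ℕ) : ZMod α) = (p : ZMod α) - 1 := by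
          rw [hj₀def, ZMod.natCast_mod, Nat.cast_sub (by omega : 1 ≤ p), Nat.cast_one]
        have hiff2 : ∀ n : ℕ, (α ∣ p * n + j₀ + 1) ↔ α ∣ n + 1 := by
          intro n
          rw [hdvdcast, hdvdcast]
          have hcastL : ((p * n + j₀ + 1 : ℕ) : ZMod α)
              = (p : ZMod α) ^ 1 * ((n + 1 : ℕ) : ZMod α) := by
            push_cast
            rw [hj₀cast]
            ring
          rw [hcastL, hunit 1]
        have hiff1 : ∀ n : ℕ, (α ∣ p ^ e * (n + 1)) ↔ α ∣ n + 1 := by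
          intro n
          rw [hdvdcast, hdvdcast]
          have hcastL : ((p ^ e * (n + 1) : ℕ) : ZMod α)
              = (p : ZMod α) ^ e * ((n + 1 : ℕ) : ZMod α) := by
            push_cast
            ring
          rw [hcastL, hunit e]
        have hb : (fun n => A (p ^ e * n + i))
            = A + (e : ℤ) • (fun n => (padicValNat p (Nat.fib (p * n + j₀ + 1)) : ℤ)) := by
          funext n
          have harg : p ^ e * n + i + 1 = p ^ e * (n + 1) := by
            have hx : p ^ e * (n + 1) = p ^ e * n + p ^ e := by ring
            omega
          simp only [hA, Pi.add_apply, Pi.smul_apply, smul_eq_mul]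
          rw [harg, FibReg.val_fib hp h hwall (p ^ e * (n + 1))
              (Nat.mul_pos (by omega) (Nat.succ_pos n)),
            FibReg.val_fib hp h hwall (n + 1) (by omega), hgval j₀ n hj₀p,
            padicValNat.mul (pow_ne_zero e (by omega)) (Nat.succ_ne_zero n),
            padicValNat.prime_pow]
          by_cases hd : α ∣ n + 1
          · rw [if_pos ((hiff1 n).2 hd), if_pos hd, if_pos ((hiff2 n).2 hd)]
            push_cast
            ring
          · rw [if_neg (fun hcon => hd ((hiff1 n).1 hcon)), if_neg hd,
              if_neg (fun hcon => hd ((hiff2 n).1 hcon))]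
            simp
        rw [hb]
        refine Submodule.add_mem _ ?_ ?_
        · apply Submodule.subset_span
          rw [hS]
          exact Or.inl rfl
        · refine Submodule.smul_mem _ _ (Submodule.subset_span ?_)
          rw [hS]
          exact Or.inr ⟨j₀, hj₀le, rfl⟩
      · set c := i + 1 with hc_def
        set s := padicValNat p c with hs_def
        set w := ordCompl[p] c with hw_def
        have hc1 : 1 ≤ c := by omega
        have hcw : p ^ s * w = c := by
          rw [hs_def, hw_def,
            show padicValNat p c = c.factorization p from (Nat.factorization_def c hp).symm]
          exact Nat.ordProj_mul_ordCompl_eq_self c p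
        have hwnd : ¬ p ∣ w := Nat.not_dvd_ordCompl hp (by omega)
        have hw1 : 1 ≤ w := Nat.ordCompl_pos p (by omega)
        have hps : p ^ s ∣ c := ⟨w, hcw.symm⟩
        have hse : s < e := by
          by_contra hnot
          have h1 : p ^ e ≤ p ^ s := Nat.pow_le_pow_right (by omega) (by omega)
          have h2 : p ^ s ≤ c := Nat.le_of_dvd (by omega) hps
          omega
        set z : ZMod α := ((c : ℕ) : ZMod α) * (((u ^ (e - 1))⁻¹ : (ZMod α)ˣ) : ZMod α)
          with hz_def
        have huval : ((u ^ (e - 1) : (ZMod α)ˣ) : ZMod α) = (p : ZMod α) ^ (e - 1) := by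
          rw [Units.val_pow_eq_pow_val, hu]
        have hzc : (p : ZMod α) ^ (e - 1) * z = ((c : ℕ) : ZMod α) := by
          rw [hz_def, ← huval]
          calc ((u ^ (e - 1) : (ZMod α)ˣ) : ZMod α) *
              (((c : ℕ) : ZMod α) * (((u ^ (e - 1))⁻¹ : (ZMod α)ˣ) : ZMod α))
              = ((c : ℕ) : ZMod α) * (((u ^ (e - 1) : (ZMod α)ˣ) : ZMod α) *
                (((u ^ (e - 1))⁻¹ : (ZMod α)ˣ) : ZMod α)) := by ring
          _ = ((c : ℕ) : ZMod α) := by rw [Units.mul_inv, mul_one]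
        set j₁ := (z.val + (α - 1)) % α with hj₁def
        have hj₁lt : j₁ < α := Nat.mod_lt _ hαpos
        have hj₁le : j₁ ≤ (p - 1) / 2 := by omega
        have hj₁p : j₁ + 1 < p := by omega
        have hj₁cast : ((j₁ : ℕ) : ZMod α) = z - 1 := by
          rw [hj₁def, ZMod.natCast_mod, Nat.cast_add, ZMod.natCast_val, ZMod.cast_id,
            Nat.cast_sub (by omega : 1 ≤ α), ZMod.natCast_self, Nat.cast_one]
          ring
        have hiff : ∀ n : ℕ, (α ∣ p * n + j₁ + 1) ↔ (α ∣ p ^ e * n + c) := by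
          intro n
          rw [hdvdcast, hdvdcast]
          have hL : ((p * n + j₁ + 1 : ℕ) : ZMod α)
              = (p : ZMod α) * (n : ZMod α) + z := by
            push_cast
            rw [hj₁cast]
            ring
          have hpe : (p : ZMod α) ^ e = (p : ZMod α) ^ (e - 1) * (p : ZMod α) := by
            rw [← pow_succ]
            congr 1
            omega
          have hR : ((p ^ e * n + c : ℕ) : ZMod α)
              = (p : ZMod α) ^ (e - 1) * ((p : ZMod α) * (n : ZMod α) + z) := by
            have hcc : ((c : ℕ) : ZMod α) = (p : ZMod α) ^ (e - 1) * z := hzc.symm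
            push_cast [hcc]
            rw [hpe]
            ring
          rw [hL, hR, hunit (e - 1)]
        have hvalarg : ∀ n : ℕ, padicValNat p (p ^ e * n + c) = s := by
          intro n
          have hpe2 : p ^ e = p ^ s * p ^ (e - s) := by
            rw [← pow_add]
            congr 1
            omega
          have harg : p ^ e * n + c = p ^ s * (p ^ (e - s) * n + w) := by
            calc p ^ e * n + c = p ^ s * p ^ (e - s) * n + p ^ s * w := by rw [← hpe2, hcw]
            _ = p ^ s * (p ^ (e - s) * n + w) := by ring
          have hnd : ¬ p ∣ (p ^ (e - s) * n + w) := by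
            intro hdd
            have h1 : p ∣ p ^ (e - s) * n :=
              dvd_mul_of_dvd_left (dvd_pow_self p (by omega : e - s ≠ 0)) n
            exact hwnd ((Nat.dvd_add_right h1).1 hdd)
          rw [harg, padicValNat.mul (pow_ne_zero s (by omega)) (by omega),
            padicValNat.prime_pow, padicValNat.eq_zero_of_not_dvd hnd, add_zero]
        have hb : (fun n => A (p ^ e * n + i))
            = ((s : ℤ) + 1) • (fun n => (padicValNat p (Nat.fib (p * n + j₁ + 1)) : ℤ)) := by
          funext n
          simp only [hA, Pi.smul_apply, smul_eq_mul]
          have harg2 : p ^ e * n + i + 1 = p ^ e * n + c := by omega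
          rw [harg2, FibReg.val_fib hp h hwall (p ^ e * n + c) (by omega), hgval j₁ n hj₁p,
            hvalarg n]
          by_cases hd : α ∣ p ^ e * n + c
          · rw [if_pos hd, if_pos ((hiff n).2 hd)]
            push_cast
            ring
          · rw [if_neg hd, if_neg (fun hcon => hd ((hiff n).1 hcon))]
            simp
        rw [hb]
        refine Submodule.smul_mem _ _ (Submodule.subset_span ?_)
        rw [hS]
        exact Or.inr ⟨j₁, hj₁le, rfl⟩
  have hspan_eq : Submodule.span ℤ (kKernel p A) = Submodule.span ℤ S := by
    apply le_antisymm
    · rw [Submodule.span_le]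
      exact hker
    · exact Submodule.span_mono hsubS
  have hTset : {b : ℕ → ℤ | ∃ j ≤ (p - 1) / 2,
        b = fun n => (padicValNat p (Nat.fib (p * n + j + 1)) : ℤ)}
      = (fun j => (fun n => (padicValNat p (Nat.fib (p * n + j + 1)) : ℤ)))
        '' (Set.Iic ((p - 1) / 2)) := by
    ext b
    constructor
    · rintro ⟨j, hj, hb⟩
      exact ⟨j, hj, hb.symm⟩
    · rintro ⟨j, hj, hb⟩
      exact ⟨j, hj, hb.symm⟩
  refine ⟨hspan_eq, ?_, ?_⟩
  · rw [hspan_eq]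
    apply Submodule.fg_span
    rw [hS, hTset]
    exact (Set.finite_singleton A).union ((Set.finite_Iic _).image _)
  · rw [hspan_eq]
    calc Module.rank ℤ (Submodule.span ℤ S) ≤ Cardinal.mk S := rank_span_le S
    _ ≤ (((p + 3) / 2 : ℕ) : Cardinal) := by
        rw [hS, hTset, Set.singleton_union]
        calc Cardinal.mk (insert A ((fun j => (fun n => (padicValNat p (Nat.fib (p * n + j + 1)) : ℤ)))
              '' (Set.Iic ((p - 1) / 2))) : Set (ℕ → ℤ))
            ≤ Cardinal.mk ((fun j => (fun n => (padicValNat p (Nat.fib (p * n + j + 1)) : ℤ)))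
              '' (Set.Iic ((p - 1) / 2)) : Set (ℕ → ℤ)) + 1 := Cardinal.mk_insert_le
        _ ≤ Cardinal.mk (Set.Iic ((p - 1) / 2) : Set ℕ) + 1 := by
            exact add_le_add_left Cardinal.mk_image_le 1
        _ = (((p - 1) / 2 + 1 : ℕ) : Cardinal) + 1 := by
            rw [← Finset.coe_Iic]
            simp
        _ = (((p + 3) / 2 : ℕ) : Cardinal) := by
            rw [show (p + 3) / 2 = ((p - 1) / 2 + 1) + 1 by omega]
            push_cast
            ring
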